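/- For every N ≥ 2 and every x = (x₁,…,x_N) ∈ D, one has H(x) ≥ |x|²/(2N) + 1/16, where |x|² := ∑_{i=1}^N |x_i|². In particular H ≥ 0 on D. -/

import Mathlib

open Finset

/-- The energy `H(x) = (1/N)∑ᵢ ‖xᵢ‖² + (1/(2N²))∑_{i≠j} log(1/‖xᵢ-xⱼ‖²)`. -/
noncomputable def H7 (N : ℕ) (x : Fin N → EuclideanSpace ℝ (Fin 2)) : ℝ :=
  (1 / N) * ∑ i, ‖x i‖ ^ 2
    + (1 / (2 * N ^ 2)) * ∑ i, ∑ j, if i ≠ j then Real.log (1 / ‖x i - x j‖ ^ 2) else 0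

/-- Lower bound for the energy: `H(x) ≥ |x|²/(2N) + 1/16` on `D`; in particular `H ≥ 0`. -/
theorem stmt7 (N : ℕ) (hN : 2 ≤ N) (x : Fin N → EuclideanSpace ℝ (Fin 2))
    (hx : ∀ i j, i ≠ j → x i ≠ x j) :
    (∑ i, ‖x i‖ ^ 2) / (2 * N) + 1 / 16 ≤ H7 N x ∧ 0 ≤ H7 N x := by
  have hn2 : (2:ℝ) ≤ (N:ℝ) := by exact_mod_cast hN
  have hn0 : (0:ℝ) < N := by linarith
  set S : ℝ := ∑ i, ‖x i‖ ^ 2 with hSdef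
  have hS0 : 0 ≤ S := Finset.sum_nonneg (fun i _ => sq_nonneg _)
  set L : ℝ := Real.log 2 with hLdef
  have hL : L < 0.6931471808 := Real.log_two_lt_d9
  -- squared distance sum bound
  have hsq : ∑ i, ∑ j, ‖x i - x j‖ ^ 2 ≤ 2 * N * S := by
    have h1 : ∀ i j : Fin N, ‖x i - x j‖ ^ 2
        = ‖x i‖ ^ 2 + ‖x j‖ ^ 2 - 2 * (inner ℝ (x i) (x j) : ℝ) := by
      intro i j
      rw [@norm_sub_sq_real]; ring
    have expand : ∑ i, ∑ j, ‖x i - x j‖ ^ 2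
        = (N:ℝ) * S + (N:ℝ) * S - 2 * ‖∑ i, x i‖ ^ 2 := by
      simp_rw [h1, Finset.sum_sub_distrib, Finset.sum_add_distrib,
        Finset.sum_const, ← Finset.mul_sum, ← inner_sum, ← sum_inner,
        real_inner_self_eq_norm_sq]
      simp [Finset.card_univ]
      rw [← Finset.mul_sum]
    have := sq_nonneg ‖∑ i, x i‖
    linarith
  -- termwise log bound
  have hterm : ∀ i j : Fin N,
      (if i ≠ j then (1 - L) else 0) - ‖x i - x j‖ ^ 2 / 2
        ≤ (if i ≠ j then Real.log (1 / ‖x i - x j‖ ^ 2) else 0) := by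
    intro i j
    by_cases h : i = j
    · simp [h]
    · simp only [h, ne_eq, not_false_iff, if_true]
      have hne : x i - x j ≠ 0 := sub_ne_zero.mpr (hx i j h)
      have ht : (0:ℝ) < ‖x i - x j‖ ^ 2 := pow_pos (norm_pos_iff.mpr hne) 2
      set t : ℝ := ‖x i - x j‖ ^ 2
      have h2 : Real.log (t / 2) ≤ t / 2 - 1 := Real.log_le_sub_one_of_pos (by linarith)
      have h3 : Real.log (t / 2) = Real.log t - L := by
        rw [Real.log_div (by linarith) two_ne_zero]
      rw [Real.log_div one_ne_zero (ne_of_gt ht), Real.log_one]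
      linarith
  -- sum of the log terms
  have hcount : ∑ i : Fin N, ∑ j : Fin N, (if i ≠ j then (1 - L : ℝ) else 0)
      = (N:ℝ) * ((N:ℝ) - 1) * (1 - L) := by
    have : ∀ i : Fin N, ∑ j : Fin N, (if i ≠ j then (1 - L : ℝ) else 0)
        = (N:ℝ) * (1 - L) - (1 - L) := by
      intro i
      have h1 : ∑ j : Fin N, (if i ≠ j then (1 - L : ℝ) else 0)
          = ∑ j : Fin N, ((1 - L) - if i = j then (1 - L : ℝ) else 0) := by
        apply Finset.sum_congr rfl
        intro j _
        by_cases h : i = j <;> simp [h]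
      rw [h1, Finset.sum_sub_distrib, Finset.sum_const, Finset.sum_ite_eq]
      simp [Finset.card_univ]
      try ring
    rw [Finset.sum_congr rfl (fun i _ => this i), Finset.sum_const]
    simp [Finset.card_univ]
    ring
  have hT : (1 - L) * ((N:ℝ) * ((N:ℝ) - 1)) - (N:ℝ) * S
      ≤ ∑ i, ∑ j, if i ≠ j then Real.log (1 / ‖x i - x j‖ ^ 2) else 0 := by
    have step : ∑ i : Fin N, ∑ j : Fin N,
        ((if i ≠ j then (1 - L : ℝ) else 0) - ‖x i - x j‖ ^ 2 / 2)
        ≤ ∑ i, ∑ j, if i ≠ j then Real.log (1 / ‖x i - x j‖ ^ 2) else 0 := by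
      apply Finset.sum_le_sum
      intro i _
      exact Finset.sum_le_sum (fun j _ => hterm i j)
    have eq1 : ∑ i : Fin N, ∑ j : Fin N,
        ((if i ≠ j then (1 - L : ℝ) else 0) - ‖x i - x j‖ ^ 2 / 2)
        = (N:ℝ) * ((N:ℝ) - 1) * (1 - L) - (∑ i, ∑ j, ‖x i - x j‖ ^ 2) / 2 := by
      simp_rw [Finset.sum_sub_distrib]
      rw [hcount]
      simp_rw [← Finset.sum_div]
    have : (∑ i, ∑ j, ‖x i - x j‖ ^ 2) / 2 ≤ (N:ℝ) * S := by linarith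
    nlinarith [step, eq1]
  -- finish
  have hpos : (0:ℝ) < 1 / (2 * (N:ℝ) ^ 2) := by positivity
  have hmain : S / (2 * N) + 1 / 16 ≤ H7 N x := by
    have hH : H7 N x = (1 / N) * S
        + (1 / (2 * N ^ 2)) * ∑ i, ∑ j, if i ≠ j then Real.log (1 / ‖x i - x j‖ ^ 2) else 0 := rfl
    rw [hH]
    have h4 : (1 / (2 * (N:ℝ) ^ 2)) * ((1 - L) * ((N:ℝ) * ((N:ℝ) - 1)) - (N:ℝ) * S)
        ≤ (1 / (2 * N ^ 2)) * ∑ i, ∑ j, if i ≠ j then Real.log (1 / ‖x i - x j‖ ^ 2) else 0 :=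
      mul_le_mul_of_nonneg_left hT (le_of_lt hpos)
    have heq : (1 / (2 * (N:ℝ) ^ 2)) * ((1 - L) * ((N:ℝ) * ((N:ℝ) - 1)) - (N:ℝ) * S)
        = (1 - L) * (((N:ℝ) - 1) / (2 * N)) - S / (2 * N) := by
      field_simp
    have hconst : (1:ℝ) / 16 ≤ (1 - L) * (((N:ℝ) - 1) / (2 * N)) := by
      have h5 : (1:ℝ)/4 ≤ ((N:ℝ) - 1) / (2 * N) := by
        rw [div_le_div_iff₀ (by norm_num) (by linarith)]
        linarith
      have h6 : (0.3:ℝ) ≤ 1 - L := by linarith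
      nlinarith
    have h7 : (1 / (N:ℝ)) * S = S / (2 * N) + S / (2 * N) := by
      field_simp; ring
    linarith [h4, heq ▸ h4]
  constructor
  · exact hmain
  · have : 0 ≤ S / (2 * (N:ℝ)) := by positivity
    linarith
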